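/- For every initial matrix V₀ ∈ M₂(ℝ) there exists a unique differentiable function V : [0,∞) → M₂(ℝ) with V(0) = V₀ satisfying V'(t) = V(t)A + AᵀV(t) + σᵀσ for all t ≥ 0, and this solution satisfies V(t) → V∞ as t → ∞, where V∞ = [[λ/(βγ), -λ/β], [-λ/β, λ(βγ² + ε)/(β²γ)]]. -/

import Mathlib

open Matrix Filter

open NormedSpace

attribute [local instance] Matrix.linftyOpNormedRing Matrix.linftyOpNormedAlgebra

/- entry projections and bridging between matrix-valued and entrywise derivatives -/

noncomputable def entryCLM (i j : Fin 2) : Matrix (Fin 2) (Fin 2) ℝ →L[ℝ] ℝ :=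
  LinearMap.toContinuousLinearMap
    { toFun := fun M => M i j
      map_add' := fun _ _ => rfl
      map_smul' := fun _ _ => rfl }

lemma hasDerivAt_entry {f : ℝ → Matrix (Fin 2) (Fin 2) ℝ} {f' : Matrix (Fin 2) (Fin 2) ℝ}
    {t : ℝ} (h : HasDerivAt f f' t) (i j : Fin 2) :
    HasDerivAt (fun s => f s i j) (f' i j) t := by
  have := (entryCLM i j).hasFDerivAt.comp_hasDerivAt t h
  exact this

lemma hasDerivAt_of_entries {f : ℝ → Matrix (Fin 2) (Fin 2) ℝ} {f' : Matrix (Fin 2) (Fin 2) ℝ}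
    {t : ℝ} (h : ∀ i j, HasDerivAt (fun s => f s i j) (f' i j) t) :
    HasDerivAt f f' t := by
  have key : ∀ g : Matrix (Fin 2) (Fin 2) ℝ,
      g = ∑ i : Fin 2, ∑ j : Fin 2, g i j • single i j (1:ℝ) := by
    intro g
    conv_lhs => rw [matrix_eq_sum_single g]
    simp [smul_single]
  have h2 : HasDerivAt (fun s => ∑ i : Fin 2, ∑ j : Fin 2, f s i j • single i j (1:ℝ))
      (∑ i : Fin 2, ∑ j : Fin 2, f' i j • single i j (1:ℝ)) t := by
    apply HasDerivAt.fun_sum; intro i _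
    apply HasDerivAt.fun_sum; intro j _
    exact (h i j).smul_const _
  rw [key f']
  exact h2.congr_of_eventuallyEq (by filter_upwards with s using (key (f s)))

/- eigen-decomposition data -/

noncomputable def rr (β γ ε : ℝ) : ℝ := Real.sqrt (γ^2*β^2 - 4*(ε*β))
noncomputable def mu (β γ ε : ℝ) : Fin 2 → ℝ :=
  ![(-(γ*β) + rr β γ ε)/2, (-(γ*β) - rr β γ ε)/2]
noncomputable def Pm (β γ ε : ℝ) : Matrix (Fin 2) (Fin 2) ℝ :=
  !![-ε, -ε; mu β γ ε 0, mu β γ ε 1]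
noncomputable def Qm (β γ ε : ℝ) : Matrix (Fin 2) (Fin 2) ℝ :=
  (ε * rr β γ ε)⁻¹ • !![mu β γ ε 1, ε; -(mu β γ ε 0), -ε]

section
set_option linter.unusedSectionVars false
variable {β γ ε : ℝ} (hβ : 0 < β) (hγ : 0 < γ) (hε : 0 < ε) (hεb : ε < γ ^ 2 * β / 4)
include hβ hγ hε hεb

lemma hr2 : rr β γ ε * rr β γ ε = γ^2*β^2 - 4*(ε*β) :=
  Real.mul_self_sqrt (by nlinarith)

lemma hrpos : 0 < rr β γ ε := Real.sqrt_pos.2 (by nlinarith)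

lemma hrlt : rr β γ ε < γ * β := by
  nlinarith [hr2 hβ hγ hε hεb, hrpos hβ hγ hε hεb, mul_pos hγ hβ]

lemma mu_neg : ∀ m, mu β γ ε m < 0 := by
  have h1 := hrlt hβ hγ hε hεb
  have h2 := hrpos hβ hγ hε hεb
  intro m; fin_cases m <;> simp [mu] <;> nlinarith

lemma mu_root : ∀ m, mu β γ ε m ^ 2 + γ*β*(mu β γ ε m) + ε*β = 0 := by
  have h := hr2 hβ hγ hε hεb
  intro m; fin_cases m <;> simp [mu] <;> linear_combination h/4

lemma hPQ : Pm β γ ε * Qm β γ ε = 1 := by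
  have h2 := hrpos hβ hγ hε hεb
  have hne : ε * rr β γ ε ≠ 0 := by positivity
  ext i j
  fin_cases i <;> fin_cases j <;>
    simp [Pm, Qm, mu, Matrix.mul_apply, Fin.sum_univ_two, Matrix.one_apply] <;>
    field_simp <;> ring

lemma hQP : Qm β γ ε * Pm β γ ε = 1 := by
  have h2 := hrpos hβ hγ hε hεb
  have hne : ε * rr β γ ε ≠ 0 := by positivity
  ext i j
  fin_cases i <;> fin_cases j <;>
    simp [Pm, Qm, mu, Matrix.mul_apply, Fin.sum_univ_two, Matrix.one_apply] <;>
    field_simp <;> ring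

lemma hAP : !![0, -ε; β, -γ * β] * Pm β γ ε = Pm β γ ε * Matrix.diagonal (mu β γ ε) := by
  have h0 := mu_root hβ hγ hε hεb 0
  have h1 := mu_root hβ hγ hε hεb 1
  ext i j
  fin_cases i <;> fin_cases j <;>
    simp [Pm, Matrix.mul_apply, Fin.sum_univ_two, Matrix.diagonal] <;>
    nlinarith [h0, h1]

lemma hAdecomp : !![0, -ε; β, -γ * β] = Pm β γ ε * Matrix.diagonal (mu β γ ε) * Qm β γ ε := by
  rw [← hAP hβ hγ hε hεb, mul_assoc, hPQ hβ hγ hε hεb, mul_one]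

lemma exp_formula (t : ℝ) :
    exp (t • !![0, -ε; β, -γ * β]) =
      Pm β γ ε * Matrix.diagonal (fun i => Real.exp (t * mu β γ ε i)) * Qm β γ ε := by
  have hQinv : (Pm β γ ε)⁻¹ = Qm β γ ε := Matrix.inv_eq_right_inv (hPQ hβ hγ hε hεb)
  have hU : IsUnit (Pm β γ ε) :=
    ⟨⟨Pm β γ ε, Qm β γ ε, hPQ hβ hγ hε hεb, hQP hβ hγ hε hεb⟩, rfl⟩
  have h1 : t • !![0, -ε; β, -γ * β] =
      Pm β γ ε * (Matrix.diagonal (t • mu β γ ε)) * (Pm β γ ε)⁻¹ := by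
    rw [hQinv, hAdecomp hβ hγ hε hεb, Matrix.diagonal_smul, ← smul_mul_assoc,
      ← mul_smul_comm]
  have hv : exp (t • mu β γ ε) = fun i => Real.exp (t * mu β γ ε i) := by
    funext i; rw [Pi.coe_exp, Pi.smul_apply, smul_eq_mul, ← Real.exp_eq_exp_ℝ]
  rw [h1, Matrix.exp_conj _ _ hU, Matrix.exp_diagonal, hv, hQinv]

lemma exp_entry (t : ℝ) (a b : Fin 2) :
    exp (t • !![0, -ε; β, -γ * β]) a b =
      ∑ m : Fin 2, Pm β γ ε a m * Real.exp (t * mu β γ ε m) * Qm β γ ε m b := by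
  rw [exp_formula hβ hγ hε hεb]
  simp [Matrix.mul_apply, Matrix.mul_diagonal, Fin.sum_univ_two]

lemma exp_entry_tendsto (a b : Fin 2) :
    Tendsto (fun t : ℝ => exp (t • !![0, -ε; β, -γ * β]) a b) atTop (nhds 0) := by
  have h0 : Tendsto (fun t : ℝ => ∑ m : Fin 2,
      Pm β γ ε a m * Real.exp (t * mu β γ ε m) * Qm β γ ε m b) atTop (nhds 0) := by
    have : (0:ℝ) = ∑ m : Fin 2, 0 := by simp
    rw [this]
    apply tendsto_finset_sum
    intro m _
    have hm : Tendsto (fun t : ℝ => t * mu β γ ε m) atTop atBot :=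
      Tendsto.atTop_mul_const_of_neg (mu_neg hβ hγ hε hεb m) tendsto_id
    have he : Tendsto (fun t : ℝ => Real.exp (t * mu β γ ε m)) atTop (nhds 0) :=
      Real.tendsto_exp_atBot.comp hm
    simpa using (he.const_mul (Pm β γ ε a m)).mul_const (Qm β γ ε m b)
  exact h0.congr (fun t => (exp_entry hβ hγ hε hεb t a b).symm)

end


/-- existence, uniqueness on `[0,∞)`, and convergence to `V∞` of
solutions of the matrix ODE `V̇(t) = V(t)A + AᵀV(t) + σᵀσ`. -/
theorem stmt_8 (β γ ε lam : ℝ) (hβ : 0 < β) (hγ : 0 < γ) (hε : 0 < ε)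
    (hεbound : ε < γ ^ 2 * β / 4) (hlam : 0 < lam)
    (V₀ : Matrix (Fin 2) (Fin 2) ℝ) :
    let A : Matrix (Fin 2) (Fin 2) ℝ := !![0, -ε; β, -γ * β]
    let σ : Fin 2 → ℝ := ![-Real.sqrt (2 * lam), γ * Real.sqrt (2 * lam)]
    let S : Matrix (Fin 2) (Fin 2) ℝ := Matrix.vecMulVec σ σ
    let Vinf : Matrix (Fin 2) (Fin 2) ℝ :=
      !![lam / (β * γ), -lam / β; -lam / β, lam * (β * γ ^ 2 + ε) / (β ^ 2 * γ)]
    ∃ V : ℝ → Matrix (Fin 2) (Fin 2) ℝ,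
      (V 0 = V₀ ∧
        ∀ t : ℝ, 0 ≤ t → ∀ i j : Fin 2,
          HasDerivAt (fun s => V s i j) ((V t * A + Aᵀ * V t + S) i j) t) ∧
      (∀ W : ℝ → Matrix (Fin 2) (Fin 2) ℝ, W 0 = V₀ →
        (∀ t : ℝ, 0 ≤ t → ∀ i j : Fin 2,
          HasDerivAt (fun s => W s i j) ((W t * A + Aᵀ * W t + S) i j) t) →
        ∀ t : ℝ, 0 ≤ t → W t = V t) ∧
      (∀ i j : Fin 2, Tendsto (fun t => V t i j) atTop (nhds (Vinf i j))) := by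
  intro A σ S Vinf
  have hβ' : β ≠ 0 := ne_of_gt hβ
  have hγ' : γ ≠ 0 := ne_of_gt hγ
  have hsq : Real.sqrt (2*lam) * Real.sqrt (2*lam) = 2*lam :=
    Real.mul_self_sqrt (by linarith)
  have hsq' : Real.sqrt 2 * Real.sqrt lam * (Real.sqrt 2 * Real.sqrt lam) = 2 * lam := by
    have h2 : Real.sqrt (2 * lam) = Real.sqrt 2 * Real.sqrt lam :=
      Real.sqrt_mul (by norm_num) lam
    rw [← h2]; exact hsq
  have hS : S = !![2*lam, -(2*lam*γ); -(2*lam*γ), 2*lam*γ^2] := by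
    show Matrix.vecMulVec σ σ = _
    ext i j
    fin_cases i <;> fin_cases j <;>
      simp [Matrix.vecMulVec_apply, σ] <;>
      first
        | linear_combination hsq'
        | linear_combination γ * hsq'
        | linear_combination -γ * hsq'
        | linear_combination γ^2 * hsq'
        | linear_combination -(γ^2) * hsq'
        | linear_combination (γ*γ) * hsq'
        | nlinarith [hsq, hsq']
  rw [hS]
  set Sm : Matrix (Fin 2) (Fin 2) ℝ := !![2*lam, -(2*lam*γ); -(2*lam*γ), 2*lam*γ^2]
    with hSm
  clear hS
  show ∃ V : ℝ → Matrix (Fin 2) (Fin 2) ℝ,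
      (V 0 = V₀ ∧
        ∀ t : ℝ, 0 ≤ t → ∀ i j : Fin 2,
          HasDerivAt (fun s => V s i j) ((V t * A + Aᵀ * V t + Sm) i j) t) ∧
      (∀ W : ℝ → Matrix (Fin 2) (Fin 2) ℝ, W 0 = V₀ →
        (∀ t : ℝ, 0 ≤ t → ∀ i j : Fin 2,
          HasDerivAt (fun s => W s i j) ((W t * A + Aᵀ * W t + Sm) i j) t) →
        ∀ t : ℝ, 0 ≤ t → W t = V t) ∧
      (∀ i j : Fin 2, Tendsto (fun t => V t i j) atTop (nhds (Vinf i j)))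
  -- Lyapunov identity
  have hAT : (!![0, -ε; β, -γ * β])ᵀ = !![0, β; -ε, -γ * β] := by
    ext i j; fin_cases i <;> fin_cases j <;> rfl
  have hLyap : Aᵀ * Vinf + Vinf * A + Sm = 0 := by
    show (!![0, -ε; β, -γ * β])ᵀ * Vinf + Vinf * !![0, -ε; β, -γ * β] + Sm = 0
    have hV : Vinf =
        !![lam / (β * γ), -lam / β; -lam / β, lam * (β * γ ^ 2 + ε) / (β ^ 2 * γ)] := rfl
    rw [hV, hSm, hAT]
    ext i j
    fin_cases i <;> fin_cases j <;>
      · simp [Matrix.mul_apply, Fin.sum_univ_two]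
        field_simp
        ring
  have hSneg : Sm = -(Aᵀ * Vinf + Vinf * A) := by
    have h := hLyap
    rwa [add_comm (Aᵀ * Vinf + Vinf * A) Sm, add_eq_zero_iff_eq_neg] at h
  -- the flow
  set E : ℝ → Matrix (Fin 2) (Fin 2) ℝ := fun s => exp (s • A) with hEdef
  have hE0 : E 0 = 1 := by
    rw [hEdef]; simp only [zero_smul]; exact exp_zero
  set C : Matrix (Fin 2) (Fin 2) ℝ := V₀ - Vinf with hCdef
  set V : ℝ → Matrix (Fin 2) (Fin 2) ℝ := fun s => (E s)ᵀ * C * E s + Vinf with hVdef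
  have hV0 : V 0 = V₀ := by
    rw [hVdef]; simp only [hE0, Matrix.transpose_one, one_mul, mul_one, hCdef]
    abel
  have hEd : ∀ t : ℝ, HasDerivAt E (E t * A) t := fun t => hasDerivAt_exp_smul_const A t
  have hETd : ∀ t : ℝ, HasDerivAt (fun s => (E s)ᵀ) (Aᵀ * (E t)ᵀ) t := by
    intro t
    have h := hasDerivAt_exp_smul_const' (𝕂 := ℝ) Aᵀ t
    have heq : ∀ u : ℝ, exp (u • Aᵀ) = (E u)ᵀ := by
      intro u; rw [hEdef, ← Matrix.transpose_smul, Matrix.exp_transpose]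
    exact (h.congr_deriv (congrArg _ (heq t))).congr_of_eventuallyEq
      (by filter_upwards with u using (heq u).symm)
  have hVd : ∀ t : ℝ, HasDerivAt V (V t * A + Aᵀ * V t + Sm) t := by
    intro t
    have h := (((hETd t).mul_const C).fun_mul (hEd t)).add_const Vinf
    have heq : Aᵀ * (E t)ᵀ * C * E t + (E t)ᵀ * C * (E t * A)
        = ((E t)ᵀ * C * E t + Vinf) * A + Aᵀ * ((E t)ᵀ * C * E t + Vinf) + Sm := by
      rw [hSneg]; noncomm_ring
    rw [heq] at h
    exact h
  refine ⟨V, ⟨hV0, fun t _ i j => hasDerivAt_entry (hVd t) i j⟩, ?_, ?_⟩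
  · -- uniqueness
    intro W hW0 hWd t ht
    have hWmat : ∀ u : ℝ, 0 ≤ u → HasDerivAt W (W u * A + Aᵀ * W u + Sm) u :=
      fun u hu => hasDerivAt_of_entries (fun i j => hWd u hu i j)
    set D : ℝ → Matrix (Fin 2) (Fin 2) ℝ := fun s => W s - V s with hDdef
    have hDd : ∀ u : ℝ, 0 ≤ u → HasDerivAt D (D u * A + Aᵀ * D u) u := by
      intro u hu
      have h := (hWmat u hu).sub (hVd u)
      have heq : (W u * A + Aᵀ * W u + Sm) - (V u * A + Aᵀ * V u + Sm)
          = (W u - V u) * A + Aᵀ * (W u - V u) := by noncomm_ring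
      rw [heq] at h
      exact h
    set N : ℝ → Matrix (Fin 2) (Fin 2) ℝ := fun s => exp (s • (-Aᵀ)) with hNdef
    set M : ℝ → Matrix (Fin 2) (Fin 2) ℝ := fun s => exp (s • (-A)) with hMdef
    have hNd : ∀ u : ℝ, HasDerivAt N ((-Aᵀ) * N u) u :=
      fun u => hasDerivAt_exp_smul_const' (-Aᵀ) u
    have hMd : ∀ u : ℝ, HasDerivAt M (M u * (-A)) u :=
      fun u => hasDerivAt_exp_smul_const (-A) u
    set G : ℝ → Matrix (Fin 2) (Fin 2) ℝ := fun s => N s * D s * M s with hGdef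
    have hGd : ∀ u : ℝ, 0 ≤ u → HasDerivAt G 0 u := by
      intro u hu
      have h := ((hNd u).fun_mul (hDd u hu)).fun_mul (hMd u)
      have e1 : Aᵀ * N u = N u * Aᵀ :=
        ((((Commute.refl Aᵀ).neg_right).smul_right u).exp_right).eq
      have e2 : A * M u = M u * A :=
        ((((Commute.refl A).neg_right).smul_right u).exp_right).eq
      have heq : ((-Aᵀ) * N u * D u + N u * (D u * A + Aᵀ * D u)) * M u
          + (N u * D u) * (M u * (-A)) = 0 := by
        rw [neg_mul, e1, mul_neg, mul_neg, ← e2]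
        noncomm_ring
      rw [heq] at h
      exact h
    have hG0 : G 0 = 0 := by
      have hN0 : N 0 = 1 := by rw [hNdef]; simp only [zero_smul]; exact exp_zero
      have hD0 : D 0 = 0 := by rw [hDdef]; simp [hW0, hV0]
      rw [hGdef]; simp [hN0, hD0]
    have hGt : G t = 0 := by
      rcases eq_or_lt_of_le ht with h0 | hlt
      · rw [← h0]; exact hG0
      · have hcont : ContinuousOn G (Set.Icc 0 t) :=
          fun u hu => ((hGd u hu.1).continuousAt).continuousWithinAt
        have hkey := constant_of_has_deriv_right_zero hcont
          (fun u hu => (hGd u hu.1).hasDerivWithinAt) t (Set.mem_Icc.mpr ⟨ht, le_refl t⟩)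
        rw [hkey, hG0]
    have hNN : exp (t • Aᵀ) * N t = 1 := by
      have hc : Commute (t • Aᵀ) (t • (-Aᵀ)) :=
        (((Commute.refl Aᵀ).neg_right).smul_left t).smul_right t
      simp only [hNdef]; rw [← Matrix.exp_add_of_commute _ _ hc, smul_neg, add_neg_cancel]
      exact exp_zero
    have hMM : M t * exp (t • A) = 1 := by
      have hc : Commute (t • (-A)) (t • A) :=
        (((Commute.refl A).neg_left).smul_left t).smul_right t
      simp only [hMdef]; rw [← Matrix.exp_add_of_commute _ _ hc, smul_neg, neg_add_cancel]
      exact exp_zero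
    have h3 : exp (t • Aᵀ) * G t * exp (t • A) = D t := by
      have hassoc : exp (t • Aᵀ) * (N t * D t * M t) * exp (t • A)
          = (exp (t • Aᵀ) * N t) * D t * (M t * exp (t • A)) := by
        noncomm_ring
      rw [show G t = N t * D t * M t from rfl, hassoc, hNN, hMM, one_mul, mul_one]
    rw [hGt, mul_zero, zero_mul] at h3
    exact sub_eq_zero.mp h3.symm
  · -- convergence
    intro i j
    have hEtend : ∀ a b : Fin 2, Tendsto (fun t => E t a b) atTop (nhds 0) := by
      intro a b
      exact exp_entry_tendsto hβ hγ hε hεbound a b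
    have hform : ∀ t : ℝ, V t i j
        = (∑ k : Fin 2, ∑ l : Fin 2, E t l i * C l k * E t k j) + Vinf i j := by
      intro t
      rw [hVdef]
      simp [Matrix.mul_apply, Matrix.transpose_apply, Finset.sum_mul, Fin.sum_univ_two]
      ring
    have hsum : Tendsto (fun t : ℝ => (∑ k : Fin 2, ∑ l : Fin 2,
        E t l i * C l k * E t k j) + Vinf i j) atTop (nhds (Vinf i j)) := by
      have h0 : Tendsto (fun t : ℝ => ∑ k : Fin 2, ∑ l : Fin 2,
          E t l i * C l k * E t k j) atTop (nhds 0) := by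
        have hz : (0:ℝ) = ∑ _k : Fin 2, ∑ _l : Fin 2, (0:ℝ) := by simp
        rw [hz]
        refine tendsto_finset_sum _ fun k _ => tendsto_finset_sum _ fun l _ => ?_
        simpa using ((hEtend l i).mul_const (C l k)).mul (hEtend k j)
      simpa using h0.add tendsto_const_nhds
    exact hsum.congr (fun t => (hform t).symm)
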